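/- For every tree T, the following equalities hold: ξ(T) + η(T) = α(T), σ(T) + η(T) = μ(T), and ξ(T) + 2η(T) + σ(T) = |V(T)|. -/
import Mathlib


open scoped Classical

set_option linter.unusedSectionVars false
set_option linter.unusedVariables false

namespace KEG

variable {V : Type*}

/-- `S` is a stable (independent) set of vertices of `G`. -/
def IsStable (G : SimpleGraph V) (S : Finset V) : Prop :=
  ∀ ⦃x⦄, x ∈ S → ∀ ⦃y⦄, y ∈ S → ¬G.Adj x y

/-- The stability number `α(G)`: maximum cardinality of a stable set. -/
noncomputable def alphaNum (G : SimpleGraph V) : ℕ :=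
  sSup {n | ∃ S : Finset V, IsStable G S ∧ S.card = n}

/-- `S` is a maximum stable set of `G`. -/
def IsMaxStable (G : SimpleGraph V) (S : Finset V) : Prop :=
  IsStable G S ∧ S.card = alphaNum G

/-- `M` is a matching of `G`: a set of edges of `G`, pairwise non-incident. -/
def IsMatching (G : SimpleGraph V) (M : Finset (Sym2 V)) : Prop :=
  (∀ e ∈ M, e ∈ G.edgeSet) ∧
    ∀ e ∈ M, ∀ f ∈ M, e ≠ f → ∀ v : V, v ∈ e → v ∉ f

/-- The matching number `μ(G)`: maximum cardinality of a matching. -/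
noncomputable def muNum (G : SimpleGraph V) : ℕ :=
  sSup {n | ∃ M : Finset (Sym2 V), IsMatching G M ∧ M.card = n}

/-- A perfect matching: a matching covering every vertex. -/
def IsPerfectMatching (G : SimpleGraph V) (M : Finset (Sym2 V)) : Prop :=
  IsMatching G M ∧ ∀ v : V, ∃ e ∈ M, v ∈ e

/-- A maximal matching: a matching such that no edge of `G` can be added to it
while keeping pairwise non-incidence, i.e. every edge of `G` outside `M` is
incident to an edge of `M`. -/
def IsMaximalMatching (G : SimpleGraph V) (M : Finset (Sym2 V)) : Prop :=
  IsMatching G M ∧ ∀ e ∈ G.edgeSet, e ∉ M → ∃ f ∈ M, ∃ v : V, v ∈ e ∧ v ∈ f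

/-- `G` is a König-Egerváry graph: `α(G) + μ(G) = |V(G)|`. -/
def KonigEgervary (G : SimpleGraph V) [Fintype V] : Prop :=
  alphaNum G + muNum G = Fintype.card V

/-- `e` is an α-critical edge of `G`: `α(G - e) > α(G)`. -/
def IsAlphaCritical (G : SimpleGraph V) (e : Sym2 V) : Prop :=
  e ∈ G.edgeSet ∧ alphaNum G < alphaNum (G.deleteEdges {e})

/-- `e` is a μ-critical edge of `G`: `μ(G - e) < μ(G)`. -/
def IsMuCritical (G : SimpleGraph V) (e : Sym2 V) : Prop :=
  e ∈ G.edgeSet ∧ muNum (G.deleteEdges {e}) < muNum G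

/-- `core(G)`: the set of vertices belonging to every maximum stable set of `G`. -/
def core (G : SimpleGraph V) : Set V :=
  {v | ∀ S : Finset V, IsMaxStable G S → v ∈ S}

/-- `ξ(G) = |core(G)|`. -/
noncomputable def xi (G : SimpleGraph V) : ℕ := (core G).ncard

/-- `σ(G)`: the number of vertices belonging to no maximum stable set of `G`. -/
noncomputable def sigmaNum (G : SimpleGraph V) : ℕ :=
  {v : V | ∀ S : Finset V, IsMaxStable G S → v ∉ S}.ncard

/-- `η(G)`: the number of α-critical edges of `G`. -/
noncomputable def eta (G : SimpleGraph V) : ℕ :=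
  {e : Sym2 V | IsAlphaCritical G e}.ncard

/-- `N(A)`: the set of vertices adjacent to some vertex of `A`. -/
def nbhd (G : SimpleGraph V) (A : Set V) : Set V :=
  {v | ∃ a ∈ A, G.Adj a v}

/-- `N[A] = A ∪ N(A)`: the closed neighborhood of `A`. -/
def closedNbhd (G : SimpleGraph V) (A : Set V) : Set V :=
  A ∪ nbhd G A


/-- anticore -/
def acore (G : SimpleGraph V) : Set V := {v | ∀ S : Finset V, IsMaxStable G S → v ∉ S}

lemma sigmaNum_eq (G : SimpleGraph V) : sigmaNum G = (acore G).ncard := rfl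

section Basics

variable [Fintype V] (G : SimpleGraph V)

lemma alphaSet_nonempty : {n | ∃ S : Finset V, IsStable G S ∧ S.card = n}.Nonempty :=
  ⟨0, ∅, fun x hx => absurd hx (Finset.notMem_empty x), rfl⟩

lemma alphaSet_bdd : BddAbove {n | ∃ S : Finset V, IsStable G S ∧ S.card = n} := by
  refine ⟨Fintype.card V, ?_⟩
  rintro n ⟨S, -, rfl⟩
  exact S.card_le_univ

lemma exists_maxStable : ∃ S : Finset V, IsMaxStable G S := by
  have := Nat.sSup_mem (alphaSet_nonempty G) (alphaSet_bdd G)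
  obtain ⟨S, hS, hc⟩ := this
  exact ⟨S, hS, hc⟩

lemma IsStable.card_le_alpha {G : SimpleGraph V} {S : Finset V} (h : IsStable G S) :
    S.card ≤ alphaNum G :=
  le_csSup (alphaSet_bdd G) ⟨S, h, rfl⟩

lemma alpha_le {n : ℕ} (h : ∀ S : Finset V, IsStable G S → S.card ≤ n) :
    alphaNum G ≤ n := by
  refine csSup_le (alphaSet_nonempty G) ?_
  rintro m ⟨S, hS, rfl⟩
  exact h S hS

lemma muSet_nonempty : {n | ∃ M : Finset (Sym2 V), IsMatching G M ∧ M.card = n}.Nonempty :=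
  ⟨0, ∅, ⟨fun e he => absurd he (Finset.notMem_empty e),
    fun e he => absurd he (Finset.notMem_empty e)⟩, rfl⟩

lemma muSet_bdd : BddAbove {n | ∃ M : Finset (Sym2 V), IsMatching G M ∧ M.card = n} := by
  refine ⟨Fintype.card (Sym2 V), ?_⟩
  rintro n ⟨M, -, rfl⟩
  exact M.card_le_univ

lemma exists_maxMatching : ∃ M : Finset (Sym2 V), IsMatching G M ∧ M.card = muNum G :=
  Nat.sSup_mem (muSet_nonempty G) (muSet_bdd G)

lemma IsMatching.card_le_mu {G : SimpleGraph V} {M : Finset (Sym2 V)} (h : IsMatching G M) :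
    M.card ≤ muNum G :=
  le_csSup (muSet_bdd G) ⟨M, h, rfl⟩

lemma mu_le {n : ℕ} (h : ∀ M : Finset (Sym2 V), IsMatching G M → M.card ≤ n) :
    muNum G ≤ n := by
  refine csSup_le (muSet_nonempty G) ?_
  rintro m ⟨M, hM, rfl⟩
  exact h M hM

lemma IsStable.mono {G H : SimpleGraph V} (hle : G ≤ H) {S : Finset V}
    (h : IsStable H S) : IsStable G S :=
  fun x hx y hy hadj => h hx hy (hle hadj)

end Basics

section LeafDel

variable [Fintype V] {G : SimpleGraph V} {u w : V}

/-- delete all edges at `w` -/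
noncomputable abbrev delW (G : SimpleGraph V) (w : V) : SimpleGraph V :=
  G.deleteEdges {e : Sym2 V | w ∈ e}

lemma adj_delW {x y : V} : (delW G w).Adj x y ↔ G.Adj x y ∧ x ≠ w ∧ y ≠ w := by
  rw [SimpleGraph.deleteEdges_adj]
  constructor
  · rintro ⟨h, hmem⟩
    refine ⟨h, ?_, ?_⟩ <;> rintro rfl <;> exact hmem (by simp [Sym2.mem_iff])
  · rintro ⟨h, hx, hy⟩
    refine ⟨h, ?_⟩
    simp only [Set.mem_setOf_eq, Sym2.mem_iff]
    rintro (rfl | rfl) <;> simp_all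

lemma not_adj_delW_w {x : V} : ¬(delW G w).Adj w x := fun h => (adj_delW.mp h).2.1 rfl

lemma not_adj_delW_u (hleaf : ∀ z, G.Adj u z → z = w) {x : V} : ¬(delW G w).Adj u x := by
  intro h
  rcases adj_delW.mp h with ⟨hG, -, hxw⟩
  exact hxw (hleaf x hG)

lemma mem_edge_delW (hleaf : ∀ z, G.Adj u z → z = w) {e : Sym2 V}
    (he : e ∈ (delW G w).edgeSet) : u ∉ e ∧ w ∉ e := by
  induction e with
  | _ x y =>
    rw [SimpleGraph.mem_edgeSet] at he
    constructor <;> rw [Sym2.mem_iff] <;> rintro (rfl | rfl)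
    · exact not_adj_delW_u hleaf he
    · exact not_adj_delW_u hleaf he.symm
    · exact not_adj_delW_w he
    · exact not_adj_delW_w he.symm

variable (huw : G.Adj u w) (hleaf : ∀ z, G.Adj u z → z = w)

include huw in
lemma not_both {S : Finset V} (hS : IsMaxStable G S) : ¬(u ∈ S ∧ w ∈ S) :=
  fun ⟨h1, h2⟩ => hS.1 h1 h2 huw

include huw hleaf in
lemma mem_or_mem {S : Finset V} (hS : IsMaxStable G S) : u ∈ S ∨ w ∈ S := by
  by_contra hc
  push_neg at hc
  have hstable : IsStable G (insert u S) := by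
    intro x hx y hy hadj
    rw [Finset.mem_insert] at hx hy
    rcases hx with hx | hx <;> rcases hy with hy | hy
    · subst hx; subst hy; exact hadj.ne rfl
    · subst hx
      have h' := hleaf y hadj
      subst h'
      exact hc.2 hy
    · subst hy
      have h' := hleaf x hadj.symm
      subst h'
      exact hc.2 hx
    · exact hS.1 hx hy hadj
  have hle := hstable.card_le_alpha
  rw [Finset.card_insert_of_notMem hc.1, hS.2] at hle
  omega

include huw hleaf in
lemma stable_delW_insert {S : Finset V} (hS : IsStable G S) :
    IsStable (delW G w) (insert u (insert w S)) := by
  intro x hx y hy hadj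
  rcases adj_delW.mp hadj with ⟨hG, hxw, hyw⟩
  rcases Finset.mem_insert.mp hx with rfl | hx
  · exact hyw (hleaf y hG)
  · rcases Finset.mem_insert.mp hx with rfl | hx
    · exact hxw rfl
    · rcases Finset.mem_insert.mp hy with rfl | hy
      · exact hxw (hleaf x hG.symm)
      · rcases Finset.mem_insert.mp hy with rfl | hy
        · exact hyw rfl
        · exact hS hx hy hG

include huw hleaf in
lemma card_insert2 {S : Finset V} (hS : IsMaxStable G S) :
    (insert u (insert w S)).card = S.card + 1 := by
  rcases mem_or_mem huw hleaf hS with hu | hw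
  · have hw : w ∉ S := fun hw => not_both huw hS ⟨hu, hw⟩
    have : u ∈ insert w S := Finset.mem_insert_of_mem hu
    rw [Finset.insert_eq_self.mpr this, Finset.card_insert_of_notMem hw]
  · have hu : u ∉ S := fun hu => not_both huw hS ⟨hu, hw⟩
    rw [Finset.insert_eq_self.mpr hw, Finset.card_insert_of_notMem hu]

lemma stable_of_delW_erase {S' : Finset V} (hS' : IsStable (delW G w) S') :
    IsStable G (S'.erase w) := by
  intro x hx y hy hadj
  exact hS' (Finset.mem_of_mem_erase hx) (Finset.mem_of_mem_erase hy)
    (adj_delW.mpr ⟨hadj, (Finset.mem_erase.mp hx).1, (Finset.mem_erase.mp hy).1⟩)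

include huw hleaf in
lemma alpha_delW : alphaNum (delW G w) = alphaNum G + 1 := by
  refine le_antisymm ?_ ?_
  · refine alpha_le _ ?_
    intro S' hS'
    have h1 := (stable_of_delW_erase hS').card_le_alpha
    by_cases hw : w ∈ S'
    · rw [Finset.card_erase_of_mem hw] at h1
      omega
    · rw [Finset.erase_eq_of_notMem hw] at h1
      omega
  · obtain ⟨S, hS⟩ := exists_maxStable G
    have h1 := (stable_delW_insert huw hleaf hS.1).card_le_alpha
    rw [card_insert2 huw hleaf hS, hS.2] at h1
    exact h1

include huw hleaf in
lemma mem_maxStable_delW {S' : Finset V} (hS' : IsMaxStable (delW G w) S') :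
    u ∈ S' ∧ w ∈ S' := by
  constructor
  · by_contra hu
    have hst : IsStable (delW G w) (insert u S') := by
      intro x hx y hy hadj
      rcases Finset.mem_insert.mp hx with rfl | hx
      · exact not_adj_delW_u hleaf hadj
      · rcases Finset.mem_insert.mp hy with rfl | hy
        · exact not_adj_delW_u hleaf hadj.symm
        · exact hS'.1 hx hy hadj
    have hle := hst.card_le_alpha
    rw [Finset.card_insert_of_notMem hu, hS'.2] at hle
    omega
  · by_contra hw
    have hst : IsStable (delW G w) (insert w S') := by
      intro x hx y hy hadj
      rcases Finset.mem_insert.mp hx with rfl | hx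
      · exact not_adj_delW_w hadj
      · rcases Finset.mem_insert.mp hy with rfl | hy
        · exact not_adj_delW_w hadj.symm
        · exact hS'.1 hx hy hadj
    have hle := hst.card_le_alpha
    rw [Finset.card_insert_of_notMem hw, hS'.2] at hle
    omega

include huw hleaf in
lemma maxStable_of_delW {S' : Finset V} (hS' : IsMaxStable (delW G w) S') :
    IsMaxStable G (S'.erase w) ∧ u ∈ S'.erase w := by
  obtain ⟨hu, hw⟩ := mem_maxStable_delW huw hleaf hS'
  refine ⟨⟨stable_of_delW_erase hS'.1, ?_⟩, Finset.mem_erase.mpr ⟨huw.ne, hu⟩⟩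
  rw [Finset.card_erase_of_mem hw, hS'.2, alpha_delW huw hleaf]; omega

include huw hleaf in
lemma maxStable_to_delW {S : Finset V} (hS : IsMaxStable G S) :
    IsMaxStable (delW G w) (insert u (insert w S)) := by
  refine ⟨stable_delW_insert huw hleaf hS.1, ?_⟩
  rw [card_insert2 huw hleaf hS, hS.2, alpha_delW huw hleaf]

include huw hleaf in
lemma core_delW : core (delW G w) = insert u (insert w (core G)) := by
  ext v
  constructor
  · intro hv
    by_cases hvu : v = u
    · exact hvu ▸ Set.mem_insert _ _
    by_cases hvw : v = w
    · exact Set.mem_insert_iff.mpr (Or.inr (hvw ▸ Set.mem_insert _ _))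
    refine Set.mem_insert_iff.mpr (Or.inr (Set.mem_insert_iff.mpr (Or.inr ?_)))
    intro S hS
    have := hv _ (maxStable_to_delW huw hleaf hS)
    rcases Finset.mem_insert.mp this with rfl | h
    · exact absurd rfl hvu
    rcases Finset.mem_insert.mp h with rfl | h
    · exact absurd rfl hvw
    · exact h
  · intro hv S' hS'
    rcases Set.mem_insert_iff.mp hv with rfl | hv
    · exact (mem_maxStable_delW huw hleaf hS').1
    rcases Set.mem_insert_iff.mp hv with rfl | hv
    · exact (mem_maxStable_delW huw hleaf hS').2
    · exact Finset.mem_of_mem_erase (hv _ (maxStable_of_delW huw hleaf hS').1)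

include huw hleaf in
lemma w_notMem_core : w ∉ core G := by
  obtain ⟨S', hS'⟩ := exists_maxStable (delW G w)
  intro hw
  have := hw _ (maxStable_of_delW huw hleaf hS').1
  exact (Finset.mem_erase.mp this).1 rfl

include huw hleaf in
lemma u_notMem_acore : u ∉ acore G := by
  obtain ⟨S', hS'⟩ := exists_maxStable (delW G w)
  intro hu
  exact hu _ (maxStable_of_delW huw hleaf hS').1 (maxStable_of_delW huw hleaf hS').2

include huw hleaf in
lemma acore_delW : acore (delW G w) = acore G \ {w} := by
  obtain ⟨S'₀, hS'₀⟩ := exists_maxStable (delW G w)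
  ext v
  constructor
  · intro hv
    have hvw : v ≠ w := by
      rintro rfl
      exact hv _ hS'₀ (mem_maxStable_delW huw hleaf hS'₀).2
    refine ⟨?_, hvw⟩
    intro S hS hmem
    exact hv _ (maxStable_to_delW huw hleaf hS)
      (Finset.mem_insert_of_mem (Finset.mem_insert_of_mem hmem))
  · rintro ⟨hv, hvw⟩ S' hS' hmem
    exact hv _ (maxStable_of_delW huw hleaf hS').1
      (Finset.mem_erase.mpr ⟨Set.mem_singleton_iff.not.mp hvw, hmem⟩)

include huw hleaf in
lemma w_mem_acore_iff : w ∈ acore G ↔ u ∈ core G := by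
  constructor
  · intro hw S hS
    rcases mem_or_mem huw hleaf hS with hu | hmem
    · exact hu
    · exact absurd hmem (hw S hS)
  · intro hu S hS hw
    exact not_both huw hS ⟨hu S hS, hw⟩

end LeafDel

section LeafDel2

variable [Fintype V] {G : SimpleGraph V} {u w : V}

lemma delW_comm_mem {e : Sym2 V} (hwe : w ∈ e) :
    delW (G.deleteEdges {e}) w = delW G w := by
  ext x y
  simp only [SimpleGraph.deleteEdges_adj, Set.mem_setOf_eq, Set.mem_singleton_iff]
  constructor
  · rintro ⟨⟨h, -⟩, h2⟩; exact ⟨h, h2⟩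
  · rintro ⟨h, h2⟩
    exact ⟨⟨h, fun hEq => h2 (by rwa [hEq])⟩, h2⟩

lemma delW_comm_notMem {e : Sym2 V} (hwe : w ∉ e) :
    delW (G.deleteEdges {e}) w = (delW G w).deleteEdges {e} := by
  ext x y
  simp only [SimpleGraph.deleteEdges_adj, Set.mem_setOf_eq, Set.mem_singleton_iff]
  tauto

variable (huw : G.Adj u w) (hleaf : ∀ z, G.Adj u z → z = w)

include huw hleaf in
lemma crit_uw_iff : IsAlphaCritical G s(u, w) ↔ u ∉ core G := by
  constructor
  · rintro ⟨he, hlt⟩ hu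
    have hle : alphaNum (G.deleteEdges {s(u, w)}) ≤ alphaNum G := by
      refine alpha_le _ ?_
      intro S' hS'
      have hT : IsStable G (S'.erase u) := by
        intro x hx y hy hadj
        obtain ⟨hxu, hxS⟩ := Finset.mem_erase.mp hx
        obtain ⟨hyu, hyS⟩ := Finset.mem_erase.mp hy
        refine hS' hxS hyS ?_
        rw [SimpleGraph.deleteEdges_adj, Set.mem_singleton_iff]
        refine ⟨hadj, fun hEq => ?_⟩
        have hmem : u ∈ s(x, y) := by rw [hEq]; exact Sym2.mem_mk_left u w
        rcases Sym2.mem_iff.mp hmem with h | h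
        · exact hxu h.symm
        · exact hyu h.symm
      by_cases hmem : u ∈ S'
      · have hcard := hT.card_le_alpha
        have hne : (S'.erase u).card ≠ alphaNum G := by
          intro hEq
          have : u ∈ S'.erase u := hu _ ⟨hT, hEq⟩
          simp at this
        have h1 : 1 ≤ S'.card := Finset.card_pos.mpr ⟨u, hmem⟩
        rw [Finset.card_erase_of_mem hmem] at hcard hne
        omega
      · rw [Finset.erase_eq_of_notMem hmem] at hT
        exact hT.card_le_alpha
    omega
  · intro hu
    have hex : ∃ S, IsMaxStable G S ∧ u ∉ S := by
      by_contra hcon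
      push_neg at hcon
      exact hu fun S hS => hcon S hS
    obtain ⟨S, hS, huS⟩ := hex
    have hwS : w ∈ S := (mem_or_mem huw hleaf hS).resolve_left huS
    refine ⟨(SimpleGraph.mem_edgeSet G).mpr huw, ?_⟩
    have hst : IsStable (G.deleteEdges {s(u, w)}) (insert u S) := by
      intro x hx y hy hadj
      rw [SimpleGraph.deleteEdges_adj, Set.mem_singleton_iff] at hadj
      obtain ⟨hG, hne⟩ := hadj
      rw [Finset.mem_insert] at hx hy
      rcases hx with hx | hx <;> rcases hy with hy | hy
      · subst hx; subst hy; exact hG.ne rfl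
      · subst hx
        have h' := hleaf y hG
        subst h'
        exact hne rfl
      · subst hy
        have h' := hleaf x hG.symm
        subst h'
        exact hne Sym2.eq_swap
      · exact hS.1 hx hy hG
    have hle := hst.card_le_alpha
    rw [Finset.card_insert_of_notMem huS, hS.2] at hle
    omega

include huw hleaf in
lemma crit_w_not {e : Sym2 V} (hwe : w ∈ e) (hne : e ≠ s(u, w)) :
    ¬IsAlphaCritical G e := by
  rintro ⟨hedge, hlt⟩
  have hHuw : (G.deleteEdges {e}).Adj u w := by
    rw [SimpleGraph.deleteEdges_adj, Set.mem_singleton_iff]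
    exact ⟨huw, fun h => hne h.symm⟩
  have hHleaf : ∀ z, (G.deleteEdges {e}).Adj u z → z = w := fun z hz =>
    hleaf z (SimpleGraph.deleteEdges_adj.mp hz).1
  have h1 := alpha_delW hHuw hHleaf
  rw [delW_comm_mem hwe] at h1
  have h2 := alpha_delW huw hleaf
  omega

include huw hleaf in
lemma crit_other {e : Sym2 V} (hwe : w ∉ e) :
    IsAlphaCritical G e ↔ IsAlphaCritical (delW G w) e := by
  have hedge : e ∈ G.edgeSet ↔ e ∈ (delW G w).edgeSet := by
    rw [SimpleGraph.edgeSet_deleteEdges]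
    simp only [Set.mem_diff, Set.mem_setOf_eq]
    exact ⟨fun h => ⟨h, hwe⟩, fun h => h.1⟩
  have hHuw : (G.deleteEdges {e}).Adj u w := by
    rw [SimpleGraph.deleteEdges_adj, Set.mem_singleton_iff]
    exact ⟨huw, fun h => hwe (by rw [← h]; exact Sym2.mem_mk_right u w)⟩
  have hHleaf : ∀ z, (G.deleteEdges {e}).Adj u z → z = w := fun z hz =>
    hleaf z (SimpleGraph.deleteEdges_adj.mp hz).1
  have h1 := alpha_delW hHuw hHleaf
  rw [delW_comm_notMem hwe] at h1
  have h2 := alpha_delW huw hleaf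
  constructor
  · rintro ⟨he, hlt⟩
    exact ⟨hedge.mp he, by omega⟩
  · rintro ⟨he, hlt⟩
    exact ⟨hedge.mpr he, by omega⟩

include huw hleaf in
lemma eta_core (hu : u ∈ core G) : eta G = eta (delW G w) := by
  unfold eta
  congr 1
  ext e
  simp only [Set.mem_setOf_eq]
  constructor
  · intro hcrit
    have hwe : w ∉ e := by
      intro hw
      by_cases heq : e = s(u, w)
      · rw [heq] at hcrit
        exact (crit_uw_iff huw hleaf).mp hcrit hu
      · exact crit_w_not huw hleaf hw heq hcrit
    exact (crit_other huw hleaf hwe).mp hcrit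
  · intro hcrit
    exact (crit_other huw hleaf (mem_edge_delW hleaf hcrit.1).2).mpr hcrit

include huw hleaf in
lemma eta_noncore (hu : u ∉ core G) : eta G = eta (delW G w) + 1 := by
  have hset : {e : Sym2 V | IsAlphaCritical G e} =
      insert s(u, w) {e : Sym2 V | IsAlphaCritical (delW G w) e} := by
    ext e
    simp only [Set.mem_setOf_eq, Set.mem_insert_iff]
    constructor
    · intro hcrit
      by_cases hw : w ∈ e
      · left
        by_contra heq
        exact crit_w_not huw hleaf hw heq hcrit
      · right
        exact (crit_other huw hleaf hw).mp hcrit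
    · rintro (rfl | hcrit)
      · exact (crit_uw_iff huw hleaf).mpr hu
      · exact (crit_other huw hleaf (mem_edge_delW hleaf hcrit.1).2).mpr hcrit
  rw [eta, eta, hset, Set.ncard_insert_of_notMem ?notmem (Set.toFinite _)]
  case notmem =>
    intro hmem
    exact (mem_edge_delW hleaf hmem.1).2 (Sym2.mem_mk_right u w)

include huw hleaf in
lemma mu_delW : muNum G = muNum (delW G w) + 1 := by
  refine le_antisymm ?_ ?_
  · refine mu_le _ ?_
    intro M hM
    by_cases hex : ∃ e ∈ M, w ∈ e
    · obtain ⟨e, heM, hwe⟩ := hex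
      have hM' : IsMatching (delW G w) (M.erase e) := by
        constructor
        · intro f hf
          have hfM := Finset.mem_of_mem_erase hf
          have hfe := (Finset.mem_erase.mp hf).1
          rw [SimpleGraph.edgeSet_deleteEdges]
          exact ⟨hM.1 f hfM, fun hwf => hM.2 e heM f hfM (Ne.symm hfe) w hwe hwf⟩
        · intro f hf g hg hne v hv
          exact hM.2 f (Finset.mem_of_mem_erase hf) g (Finset.mem_of_mem_erase hg) hne v hv
      have hcard := hM'.card_le_mu
      rw [Finset.card_erase_of_mem heM] at hcard
      have h1 : 1 ≤ M.card := Finset.card_pos.mpr ⟨e, heM⟩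
      omega
    · push_neg at hex
      have hM' : IsMatching (delW G w) M := by
        refine ⟨?_, hM.2⟩
        intro f hf
        rw [SimpleGraph.edgeSet_deleteEdges]
        exact ⟨hM.1 f hf, hex f hf⟩
      have := hM'.card_le_mu
      omega
  · obtain ⟨M', hM', hcard⟩ := exists_maxMatching (delW G w)
    have hnotin : ∀ f ∈ M', u ∉ f ∧ w ∉ f := fun f hf => mem_edge_delW hleaf (hM'.1 f hf)
    have hsuwM' : s(u, w) ∉ M' := fun h => (hnotin _ h).2 (Sym2.mem_mk_right u w)
    have hmatch : IsMatching G (insert s(u, w) M') := by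
      constructor
      · intro f hf
        rcases Finset.mem_insert.mp hf with rfl | hf
        · exact (SimpleGraph.mem_edgeSet G).mpr huw
        · have := hM'.1 f hf
          rw [SimpleGraph.edgeSet_deleteEdges] at this
          exact this.1
      · intro e he f hf hne v hv
        rcases Finset.mem_insert.mp he with he' | he'
        · subst he'
          rcases Finset.mem_insert.mp hf with hf' | hf'
          · exact absurd hf'.symm hne
          · intro hvf
            rcases Sym2.mem_iff.mp hv with h | h
            · rw [h] at hvf; exact (hnotin f hf').1 hvf
            · rw [h] at hvf; exact (hnotin f hf').2 hvf
        · rcases Finset.mem_insert.mp hf with hf' | hf'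
          · subst hf'
            intro hvf
            rcases Sym2.mem_iff.mp hvf with h | h
            · rw [h] at hv; exact (hnotin e he').1 hv
            · rw [h] at hv; exact (hnotin e he').2 hv
          · exact hM'.2 e he' f hf' hne v hv
    have hfin := hmatch.card_le_mu
    rw [Finset.card_insert_of_notMem hsuwM', hcard] at hfin
    exact hfin

include huw hleaf in
lemma step_triple
    (IH : xi (delW G w) + eta (delW G w) = alphaNum (delW G w) ∧
      sigmaNum (delW G w) + eta (delW G w) = muNum (delW G w) ∧
      xi (delW G w) + 2 * eta (delW G w) + sigmaNum (delW G w) = Fintype.card V) :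
    xi G + eta G = alphaNum G ∧ sigmaNum G + eta G = muNum G ∧
      xi G + 2 * eta G + sigmaNum G = Fintype.card V := by
  obtain ⟨ih1, ih2, ih3⟩ := IH
  have halpha := alpha_delW huw hleaf
  have hmu := mu_delW huw hleaf
  have hcore := core_delW huw hleaf
  have hwcore := w_notMem_core huw hleaf
  have hacore := acore_delW huw hleaf
  by_cases hu : u ∈ core G
  · have hxi : xi (delW G w) = xi G + 1 := by
      rw [xi, hcore, Set.insert_eq_of_mem (Set.mem_insert_of_mem _ hu),
        Set.ncard_insert_of_notMem hwcore (Set.toFinite _)]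
      rfl
    have hw_ac : w ∈ acore G := (w_mem_acore_iff huw hleaf).mpr hu
    have hsig : sigmaNum G = sigmaNum (delW G w) + 1 := by
      rw [sigmaNum_eq, sigmaNum_eq, hacore,
        ← Set.ncard_insert_of_notMem (fun h => h.2 rfl) (Set.toFinite _),
        Set.insert_diff_singleton, Set.insert_eq_of_mem hw_ac]
    have heta := eta_core huw hleaf hu
    refine ⟨by omega, by omega, by omega⟩
  · have hunotin : u ∉ insert w (core G) := by
      simp only [Set.mem_insert_iff]
      push_neg
      exact ⟨huw.ne, hu⟩
    have hxi : xi (delW G w) = xi G + 2 := by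
      rw [xi, hcore, Set.ncard_insert_of_notMem hunotin (Set.toFinite _),
        Set.ncard_insert_of_notMem hwcore (Set.toFinite _)]
      rfl
    have hw_ac : w ∉ acore G := fun h => hu ((w_mem_acore_iff huw hleaf).mp h)
    have hsig : sigmaNum G = sigmaNum (delW G w) := by
      rw [sigmaNum_eq, sigmaNum_eq, hacore, Set.diff_singleton_eq_self hw_ac]
    have heta := eta_noncore huw hleaf hu
    refine ⟨by omega, by omega, by omega⟩

end LeafDel2

section Main

open SimpleGraph Walk

variable [Fintype V]

lemma exists_leaf {G : SimpleGraph V} (hac : G.IsAcyclic) {x y : V}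
    (hxy : G.Adj x y) : ∃ u w : V, G.Adj u w ∧ ∀ z, G.Adj u z → z = w := by
  classical
  set L : Set ℕ := {n | ∃ (a b : V) (p : G.Walk a b), p.IsPath ∧ p.length = n} with hL
  have hbdd : BddAbove L := by
    refine ⟨Fintype.card V, ?_⟩
    rintro n ⟨a, b, p, hp, rfl⟩
    exact hp.length_lt.le
  have h1 : (1 : ℕ) ∈ L :=
    ⟨x, y, (SimpleGraph.Path.singleton hxy).1, (SimpleGraph.Path.singleton hxy).2, by
      simp [SimpleGraph.Path.singleton]⟩
  have hN : sSup L ∈ L := Nat.sSup_mem ⟨1, h1⟩ hbdd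
  have h1N : 1 ≤ sSup L := le_csSup hbdd h1
  obtain ⟨a, b, p, hp, hlen⟩ := hN
  cases p with
  | nil => simp at hlen; omega
  | @cons _ c _ h q =>
    refine ⟨a, c, h, ?_⟩
    intro z hz
    have hzsup : z ∈ (Walk.cons h q).support := by
      by_contra hns
      have hpath : (Walk.cons hz.symm (Walk.cons h q)).IsPath :=
        (Walk.cons_isPath_iff _ _).2 ⟨hp, hns⟩
      have hmem : sSup L + 1 ∈ L := ⟨z, b, _, hpath, by simp [hlen]⟩
      have := le_csSup hbdd hmem
      omega
    have huniq := hac.path_unique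
      ⟨(Walk.cons h q).takeUntil z hzsup, hp.takeUntil hzsup⟩ (SimpleGraph.Path.singleton hz)
    have hw : (Walk.cons h q).takeUntil z hzsup = Walk.cons hz Walk.nil :=
      congrArg Subtype.val huniq
    have hspec := (Walk.cons h q).take_spec hzsup
    rw [hw] at hspec
    have := congrArg (fun r => Walk.getVert r 1) hspec
    simpa using this

lemma edgeless_triple (G : SimpleGraph V) (h : ∀ x y : V, ¬G.Adj x y) :
    xi G + eta G = alphaNum G ∧ sigmaNum G + eta G = muNum G ∧
      xi G + 2 * eta G + sigmaNum G = Fintype.card V := by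
  have halpha : alphaNum G = Fintype.card V := by
    refine le_antisymm (alpha_le _ fun S _ => S.card_le_univ) ?_
    have hst : IsStable G Finset.univ := fun x _ y _ hadj => h x y hadj
    have := hst.card_le_alpha
    rwa [Finset.card_univ] at this
  have hmax : ∀ S : Finset V, IsMaxStable G S ↔ S = Finset.univ := by
    intro S
    constructor
    · intro hS
      exact (Finset.card_eq_iff_eq_univ S).mp (hS.2.trans halpha)
    · rintro rfl
      exact ⟨fun x _ y _ hadj => h x y hadj, by rw [Finset.card_univ, halpha]⟩
  have hcore : core G = Set.univ := by
    ext v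
    simp only [Set.mem_univ, iff_true]
    intro S hS
    rw [(hmax S).mp hS]
    exact Finset.mem_univ v
  have hxi : xi G = Fintype.card V := by rw [xi, hcore, Set.ncard_univ, Nat.card_eq_fintype_card]
  have hsig : sigmaNum G = 0 := by
    rw [sigmaNum_eq, Set.ncard_eq_zero (Set.toFinite _)]
    refine Set.eq_empty_iff_forall_notMem.mpr ?_
    intro v hv
    exact hv Finset.univ ((hmax _).mpr rfl) (Finset.mem_univ v)
  have heta : eta G = 0 := by
    rw [eta, Set.ncard_eq_zero (Set.toFinite _)]
    refine Set.eq_empty_iff_forall_notMem.mpr ?_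
    intro e
    induction e with
    | _ x y =>
      rintro ⟨he, -⟩
      exact h x y ((SimpleGraph.mem_edgeSet G).mp he)
  have hmu : muNum G = 0 := by
    refine Nat.le_zero.mp (mu_le _ ?_)
    intro M hM
    have hMempty : M = ∅ := by
      refine Finset.eq_empty_of_forall_notMem ?_
      intro e
      induction e with
      | _ x y =>
        intro he
        exact h x y ((SimpleGraph.mem_edgeSet G).mp (hM.1 _ he))
    simp [hMempty]
  refine ⟨by omega, by omega, by omega⟩

lemma acyclic_delW {G : SimpleGraph V} {w : V} (hac : G.IsAcyclic) :
    (delW G w).IsAcyclic :=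
  fun _ c hc => hac (c.mapLe (SimpleGraph.deleteEdges_le _)) (hc.mapLe _)

lemma forest_triple : ∀ (n : ℕ) (G : SimpleGraph V), G.IsAcyclic → G.edgeSet.ncard ≤ n →
    xi G + eta G = alphaNum G ∧ sigmaNum G + eta G = muNum G ∧
      xi G + 2 * eta G + sigmaNum G = Fintype.card V := by
  intro n
  induction n with
  | zero =>
    intro G hac h0
    have hempty : G.edgeSet = ∅ := by
      have h0' := Nat.le_zero.mp h0
      rwa [Set.ncard_eq_zero (Set.toFinite _)] at h0'
    refine edgeless_triple G ?_
    intro x y hadj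
    have : s(x, y) ∈ G.edgeSet := hadj
    rw [hempty] at this
    exact this
  | succ n ih =>
    intro G hac hle
    by_cases hE : ∀ x y : V, ¬G.Adj x y
    · exact edgeless_triple G hE
    · push_neg at hE
      obtain ⟨x, y, hxy⟩ := hE
      obtain ⟨u, w, huw, hleaf⟩ := exists_leaf hac hxy
      have hsub : (delW G w).edgeSet ⊂ G.edgeSet := by
        rw [SimpleGraph.edgeSet_deleteEdges]
        refine ⟨Set.diff_subset, fun hsup => ?_⟩
        have hmem : s(u, w) ∈ G.edgeSet \ {e : Sym2 V | w ∈ e} := hsup huw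
        exact hmem.2 (Sym2.mem_mk_right u w)
      have hcount : (delW G w).edgeSet.ncard ≤ n := by
        have := Set.ncard_lt_ncard hsub (Set.toFinite _)
        omega
      exact step_triple huw hleaf (ih _ (acyclic_delW hac) hcount)

end Main

/-- For every tree `T`: `ξ(T) + η(T) = α(T)`, `σ(T) + η(T) = μ(T)`, and
`ξ(T) + 2η(T) + σ(T) = |V(T)|`. -/
theorem stmt_19 {V : Type*} [Fintype V] (T : SimpleGraph V) (hT : T.IsTree) :
    xi T + eta T = alphaNum T ∧ sigmaNum T + eta T = muNum T ∧
      xi T + 2 * eta T + sigmaNum T = Fintype.card V := by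
  obtain ⟨-, hac⟩ := hT
  exact forest_triple _ T hac le_rfl

end KEG
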